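/- arXiv:1406.0047 — 2 statements merged into one kernel-verified Lean document; each statement's English description precedes it below -/
import Mathlib

section
/- Let d ≥ 1 and let l, m be real numbers with 0 < l < d, 0 < m < d, and l + m - d > 0. Then there exists a constant C > 0 such that for every nonzero k ∈ ℤ^d, the sum over all pairs (k₁, k₂) of nonzero lattice points with k₁ + k₂ = k of 1/(|k₁|^l |k₂|^m) is at most C / |k|^(l+m-d). -/
noncomputable section

/-- Euclidean norm of a lattice point in `ℤ^d`. -/
def znorm {d : ℕ} (k : Fin d → ℤ) : ℝ := Real.sqrt (∑ i, ((k i : ℝ)) ^ 2)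


open Finset Real

/-- Bernoulli-type: for `p > 0` and `x ≥ 2`, `1 + p/x ≤ (x/(x-1))^p`. -/
lemma key_bern {p x : ℝ} (hp : 0 < p) (hx : 2 ≤ x) :
    1 + p / x ≤ (x / (x - 1)) ^ p := by
  have hx0 : (0:ℝ) < x := by linarith
  have hxm : (0:ℝ) < x - 1 := by linarith
  rcases le_or_gt 1 p with hp1 | hp1
  · have hge : (0:ℝ) ≤ 1/(x-1) := by positivity
    have h := one_add_mul_self_le_rpow_one_add (s := 1/(x-1)) (by linarith) hp1
    have e : (1:ℝ) + 1/(x-1) = x/(x-1) := by field_simp; ring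
    rw [e] at h
    refine le_trans ?_ h
    have : p / x ≤ p * (1/(x-1)) := by
      rw [mul_one_div]
      exact div_le_div_of_nonneg_left hp.le hxm (by linarith)
    linarith
  · have hs : (-1:ℝ) ≤ -(1/x) := by
      have : 1/x ≤ 1 := by rw [div_le_one hx0]; linarith
      linarith
    have h := rpow_one_add_le_one_add_mul_self hs hp.le hp1.le
    have e : (1:ℝ) + -(1/x) = (x-1)/x := by field_simp; ring
    rw [e] at h
    -- h : ((x-1)/x)^p ≤ 1 + p * -(1/x) = 1 - p/x
    have hB : (0:ℝ) < 1 + p * -(1/x) := by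
      have : p * (1/x) < 1 := by
        have h1 : p * (1/x) ≤ 1 * (1/x) := by
          apply mul_le_mul_of_nonneg_right hp1.le (by positivity)
        have : (1:ℝ) * (1/x) < 1 := by rw [one_mul, div_lt_one hx0]; linarith
        linarith
      linarith
    have hA : (0:ℝ) < ((x-1)/x) ^ p := rpow_pos_of_pos (by positivity) p
    have e2 : (x / (x - 1)) ^ p = (((x-1)/x) ^ p)⁻¹ := by
      rw [← Real.inv_rpow (by positivity)]
      congr 1
      field_simp
    rw [e2]
    have h1 : (1 + p/x) * ((x-1)/x)^p ≤ (1 + p/x) * (1 + p * -(1/x)) := by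
      apply mul_le_mul_of_nonneg_left h (by positivity)
    have h2 : (1 + p/x) * (1 + p * -(1/x)) ≤ 1 := by
      have : p/x = p * (1/x) := by ring
      nlinarith [sq_nonneg (p * (1/x)), mul_pos hp (by positivity : (0:ℝ) < 1/x)]
    have h3 : (1 + p/x) * ((x-1)/x)^p ≤ 1 := le_trans h1 h2
    calc 1 + p/x = (1 + p/x) * ((x-1)/x)^p * (((x-1)/x)^p)⁻¹ := by field_simp
    _ ≤ 1 * (((x-1)/x)^p)⁻¹ := by
        apply mul_le_mul_of_nonneg_right h3 (by positivity)
    _ = (((x-1)/x)^p)⁻¹ := one_mul _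

/-- Tail p-series partial sum bound. -/
lemma sum_Ioc_rpow_le {a : ℝ} (ha : 1 < a) (N M : ℕ) (hN : 1 ≤ N) :
    ∑ n ∈ Ioc N M, ((n:ℝ)) ^ (-a) ≤ (a - 1)⁻¹ * (N:ℝ) ^ (1 - a) := by
  have key : ∀ n ∈ Ioc N M, ((n:ℝ)) ^ (-a)
      ≤ (a - 1)⁻¹ * ((((n:ℝ)) - 1) ^ (1-a) - ((n:ℝ)) ^ (1-a)) := by
    intro n hn
    rw [mem_Ioc] at hn
    have hn2 : 2 ≤ (n:ℝ) := by exact_mod_cast Nat.succ_le_of_lt (lt_of_le_of_lt hN hn.1)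
    set u : ℝ := (n:ℝ) with hu
    have hu0 : (0:ℝ) < u := by linarith
    have hu1 : (0:ℝ) < u - 1 := by linarith
    have k1 : 1 + (a-1)/u ≤ (u/(u-1))^(a-1) := key_bern (by linarith) hn2
    have e1 : (u/(u-1))^(a-1) = u^(a-1) * (u-1)^(1-a) := by
      rw [Real.div_rpow hu0.le hu1.le, div_eq_mul_inv, ← Real.rpow_neg hu1.le]
      ring_nf
    rw [e1] at k1
    have k2 : u^(1-a) * (1 + (a-1)/u) ≤ u^(1-a) * (u^(a-1) * (u-1)^(1-a)) :=
      mul_le_mul_of_nonneg_left k1 (rpow_nonneg hu0.le _)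
    have e2 : u^(1-a) * (u^(a-1) * (u-1)^(1-a)) = (u-1)^(1-a) := by
      rw [← mul_assoc, ← Real.rpow_add hu0]
      norm_num
    have e3 : u^(1-a) * (1 + (a-1)/u) = u^(1-a) + (a-1) * u^(-a) := by
      rw [mul_add, mul_one]
      congr 1
      rw [div_eq_mul_inv, ← Real.rpow_neg_one u, mul_comm (a-1), ← mul_assoc,
        ← Real.rpow_add hu0]
      ring_nf
    rw [e3, e2] at k2
    rw [inv_mul_eq_div, le_div_iff₀ (by linarith : (0:ℝ) < a - 1)]
    linarith
  calc ∑ n ∈ Ioc N M, ((n:ℝ)) ^ (-a)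
      ≤ ∑ n ∈ Ioc N M, (a - 1)⁻¹ * ((((n:ℝ)) - 1) ^ (1-a) - ((n:ℝ)) ^ (1-a)) :=
        sum_le_sum key
    _ = (a-1)⁻¹ * ∑ n ∈ Ioc N M, ((((n:ℝ)) - 1) ^ (1-a) - ((n:ℝ)) ^ (1-a)) := by
        rw [mul_sum]
    _ ≤ (a - 1)⁻¹ * (N:ℝ) ^ (1 - a) := by
        apply mul_le_mul_of_nonneg_left _ (inv_nonneg.mpr (by linarith))
        have : Ioc N M = Ico (N+1) (M+1) := by
          rw [Finset.Ico_add_one_right_eq_Icc, Finset.Icc_add_one_left_eq_Ioc]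
        rw [this, Finset.sum_Ico_eq_sum_range]
        have e4 : ∀ i : ℕ, (((N+1+i:ℕ):ℝ) - 1) ^ (1-a) - ((N+1+i:ℕ):ℝ) ^ (1-a)
            = (fun j : ℕ => -(((N+j:ℕ):ℝ) ^ (1-a))) (i+1)
              - (fun j : ℕ => -(((N+j:ℕ):ℝ) ^ (1-a))) i := by
          intro i
          simp only
          push_cast
          ring_nf
        have step := Finset.sum_range_sub (fun j : ℕ => -(((N+j:ℕ):ℝ) ^ (1-a))) (M+1-(N+1))
        refine le_trans (le_of_eq (Finset.sum_congr rfl fun i _ => e4 i)) ?_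
        rw [step]
        have h1 : (0:ℝ) ≤ ((N+(M+1-(N+1)):ℕ):ℝ) ^ (1-a) := rpow_nonneg (by positivity) _
        simp only [Nat.add_zero]
        linarith

/-- Ball p-series partial sum bound. -/
lemma sum_Icc_rpow_le {b : ℝ} (hb : -1 < b) (N : ℕ) (hN : 1 ≤ N) :
    ∑ n ∈ Icc 1 N, ((n:ℝ)) ^ b ≤ (1 + (b+1)⁻¹) * (N:ℝ) ^ (b+1) := by
  have hN0 : (0:ℝ) < (N:ℝ) := by exact_mod_cast hN
  have hq : (0:ℝ) < b + 1 := by linarith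
  rcases le_or_gt 0 b with hb0 | hb0
  · -- easy case: each term ≤ N^b
    calc ∑ n ∈ Icc 1 N, ((n:ℝ)) ^ b ≤ ∑ _n ∈ Icc 1 N, ((N:ℝ)) ^ b := by
          apply sum_le_sum
          intro n hn
          rw [mem_Icc] at hn
          exact rpow_le_rpow (by positivity) (by exact_mod_cast hn.2) hb0
      _ = (N:ℝ) * (N:ℝ) ^ b := by
          rw [sum_const, Nat.card_Icc]
          simp [nsmul_eq_mul]
      _ = (N:ℝ) ^ (b+1) := by
          rw [← Real.rpow_one_add' hN0.le (by linarith)]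
          ring_nf
      _ ≤ (1 + (b+1)⁻¹) * (N:ℝ) ^ (b+1) := by
          have h1 : (0:ℝ) < (b+1)⁻¹ := by positivity
          nlinarith [rpow_pos_of_pos hN0 (b+1)]
  · -- hard case: telescoping with Bernoulli
    have key : ∀ n ∈ Icc 1 N, ((n:ℝ)) ^ b
        ≤ (b+1)⁻¹ * (((n:ℝ)) ^ (b+1) - (((n:ℝ)) - 1) ^ (b+1)) := by
      intro n hn
      rw [mem_Icc] at hn
      have hu1 : (1:ℝ) ≤ (n:ℝ) := by exact_mod_cast hn.1
      set u : ℝ := (n:ℝ)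
      have hu0 : (0:ℝ) < u := by linarith
      have hs : (-1:ℝ) ≤ -(1/u) := by
        have : 1/u ≤ 1 := by rw [div_le_one hu0]; linarith
        linarith
      have h := rpow_one_add_le_one_add_mul_self hs hq.le (by linarith)
      have e : (1:ℝ) + -(1/u) = (u-1)/u := by field_simp; ring
      rw [e] at h
      -- h : ((u-1)/u)^(b+1) ≤ 1 - (b+1)/u
      have k2 : u^(b+1) * ((u-1)/u)^(b+1) ≤ u^(b+1) * (1 + (b+1) * -(1/u)) :=
        mul_le_mul_of_nonneg_left h (rpow_nonneg hu0.le _)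
      have e2 : u^(b+1) * ((u-1)/u)^(b+1) = (u-1)^(b+1) := by
        rw [← Real.mul_rpow hu0.le (div_nonneg (by linarith) hu0.le)]
        congr 1
        field_simp
      have h5 : u^(b+1) * u⁻¹ = u^b := by
        rw [← Real.rpow_neg_one u, ← Real.rpow_add hu0]
        ring_nf
      have e3 : u^(b+1) * (1 + (b+1) * -(1/u)) = u^(b+1) - (b+1) * u^b := by
        have expand : u^(b+1) * (1 + (b+1) * -(1/u)) = u^(b+1) - (b+1) * (u^(b+1) * u⁻¹) := by
          field_simp
          ring
        rw [expand, h5]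
      rw [e2, e3] at k2
      rw [inv_mul_eq_div, le_div_iff₀ hq]
      linarith
    calc ∑ n ∈ Icc 1 N, ((n:ℝ)) ^ b
        ≤ ∑ n ∈ Icc 1 N, (b+1)⁻¹ * (((n:ℝ)) ^ (b+1) - (((n:ℝ)) - 1) ^ (b+1)) :=
          sum_le_sum key
      _ = (b+1)⁻¹ * ∑ n ∈ Icc 1 N, (((n:ℝ)) ^ (b+1) - (((n:ℝ)) - 1) ^ (b+1)) := by
          rw [mul_sum]
      _ ≤ (b+1)⁻¹ * (N:ℝ) ^ (b+1) := by
          apply mul_le_mul_of_nonneg_left _ (by positivity)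
          have hIcc : Icc 1 N = Ico 1 (N+1) := (Finset.Ico_add_one_right_eq_Icc 1 N).symm
          rw [hIcc, Finset.sum_Ico_eq_sum_range]
          have e4 : ∀ i : ℕ, ((1+i:ℕ):ℝ) ^ (b+1) - (((1+i:ℕ):ℝ) - 1) ^ (b+1)
              = (fun j : ℕ => ((j:ℕ):ℝ) ^ (b+1)) (i+1) - (fun j : ℕ => ((j:ℕ):ℝ) ^ (b+1)) i := by
            intro i
            simp only
            push_cast
            ring_nf
          have step := Finset.sum_range_sub (fun j : ℕ => ((j:ℕ):ℝ) ^ (b+1)) (N+1-1)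
          refine le_trans (le_of_eq (Finset.sum_congr rfl fun i _ => e4 i)) ?_
          rw [step]
          simp only [Nat.add_sub_cancel, Nat.cast_zero]
          rw [Real.zero_rpow (by linarith)]
          linarith
      _ ≤ (1 + (b+1)⁻¹) * (N:ℝ) ^ (b+1) := by
          nlinarith [rpow_pos_of_pos hN0 (b+1), inv_pos.mpr hq]

variable {d : ℕ}

/-- Sup norm (as a natural number) of a lattice vector. -/
def nu (v : Fin d → ℤ) : ℕ := Finset.univ.sup fun i => (v i).natAbs

lemma natAbs_le_nu (v : Fin d → ℤ) (i : Fin d) : (v i).natAbs ≤ nu v :=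
  Finset.le_sup (f := fun i => (v i).natAbs) (mem_univ i)

lemma nu_le_iff {v : Fin d → ℤ} {N : ℕ} : nu v ≤ N ↔ ∀ i, (v i).natAbs ≤ N := by
  simp [nu, Finset.sup_le_iff]

lemma nu_eq_zero {v : Fin d → ℤ} : nu v = 0 ↔ v = 0 := by
  constructor
  · intro h
    funext i
    have := (nu_le_iff.mp h.le) i
    simpa [Int.natAbs_eq_zero] using Nat.le_zero.mp this
  · rintro rfl
    simp [nu]

lemma nu_pos {v : Fin d → ℤ} (hv : v ≠ 0) : 1 ≤ nu v := by
  rcases Nat.eq_zero_or_pos (nu v) with h | h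
  · exact absurd (nu_eq_zero.mp h) hv
  · exact h

lemma nu_add_le (a b : Fin d → ℤ) : nu (a + b) ≤ nu a + nu b := by
  rw [nu, Finset.sup_le_iff]
  intro i _
  calc ((a + b) i).natAbs = (a i + b i).natAbs := by simp
    _ ≤ (a i).natAbs + (b i).natAbs := Int.natAbs_add_le _ _
    _ ≤ nu a + nu b := Nat.add_le_add (natAbs_le_nu a i) (natAbs_le_nu b i)

lemma nu_triangle1 (k j : Fin d → ℤ) : nu k ≤ nu j + nu (k - j) := by
  have : j + (k - j) = k := by ring
  calc nu k = nu (j + (k - j)) := by rw [this]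
    _ ≤ nu j + nu (k - j) := nu_add_le _ _

lemma nu_triangle2 (k j : Fin d → ℤ) : nu (k - j) ≤ nu k + nu j := by
  have h : k - j = k + (-j) := by ring
  have hneg : nu (-j : Fin d → ℤ) = nu j := by
    simp [nu]
  calc nu (k - j) = nu (k + (-j)) := by rw [h]
    _ ≤ nu k + nu (-j : Fin d → ℤ) := nu_add_le _ _
    _ = nu k + nu j := by rw [hneg]

lemma nu_triangle3 (k j : Fin d → ℤ) : nu j ≤ nu k + nu (k - j) := by
  have h : j = k - (k - j) := by ring
  calc nu j = nu (k - (k - j)) := by rw [← h]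
    _ ≤ nu k + nu (k - j) := nu_triangle2 _ _

/-- The box of side `2N+1`. -/
def bbox (d N : ℕ) : Finset (Fin d → ℤ) :=
  Fintype.piFinset fun _ => Finset.Icc (-(N:ℤ)) (N:ℤ)

lemma mem_bbox {N : ℕ} {v : Fin d → ℤ} : v ∈ bbox d N ↔ nu v ≤ N := by
  rw [bbox, Fintype.mem_piFinset, nu_le_iff]
  apply forall_congr'
  intro i
  rw [mem_Icc, ← abs_le, ← Int.natCast_natAbs]
  exact Int.ofNat_le

lemma card_bbox (N : ℕ) : (bbox d N).card = (2*N+1)^d := by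
  rw [bbox, Fintype.card_piFinset]
  have h : ((N:ℤ) + 1 - -(N:ℤ)).toNat = 2*N+1 := by
    have : ((N:ℤ) + 1 - -(N:ℤ)) = ((2*N+1 : ℕ) : ℤ) := by push_cast; ring
    rw [this, Int.toNat_natCast]
  simp only [Int.card_Icc, Finset.prod_const, Finset.card_univ, Fintype.card_fin]
  rw [h]

lemma bbox_mono {M N : ℕ} (h : M ≤ N) : bbox d M ⊆ bbox d N := by
  intro v hv
  rw [mem_bbox] at hv ⊢
  omega

lemma int_pow_sub_pow_le (x y : ℤ) (hy : 0 ≤ y) (h : y ≤ x) :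
    ∀ e : ℕ, x^(e+1) - y^(e+1) ≤ ((e:ℤ)+1) * (x - y) * x^e := by
  intro e
  induction e with
  | zero => simp
  | succ n ih =>
    have h1 : y^(n+1) ≤ x^(n+1) := pow_le_pow_left₀ hy h _
    have hx : (0:ℤ) ≤ x := hy.trans h
    calc x^(n+2) - y^(n+2) = x*(x^(n+1) - y^(n+1)) + (x - y)*y^(n+1) := by ring
      _ ≤ x*(((n:ℤ)+1)*(x-y)*x^n) + (x-y)*x^(n+1) :=
          add_le_add (mul_le_mul_of_nonneg_left ih hx)
            (mul_le_mul_of_nonneg_left h1 (by linarith))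
      _ = ((n:ℤ)+2)*(x-y)*x^(n+1) := by ring
      _ = (((n+1:ℕ):ℤ)+1)*(x-y)*x^(n+1) := by push_cast; ring

/-- Shell cardinality bound: the number of lattice points with `nu v = n` (inside any finset)
is at most `2*d*3^(d-1) * n^(d-1)`. -/
lemma card_shell_le (hd : 1 ≤ d) (t : Finset (Fin d → ℤ)) (n : ℕ) (hn : 1 ≤ n) :
    (t.filter fun v => nu v = n).card ≤ 2*d*3^(d-1) * n^(d-1) := by
  have hsub : (t.filter fun v => nu v = n) ⊆ bbox d n \ bbox d (n-1) := by
    intro v hv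
    rw [mem_filter] at hv
    rw [mem_sdiff, mem_bbox, mem_bbox]
    omega
  have h1 : (t.filter fun v => nu v = n).card ≤ (2*n+1)^d - (2*(n-1)+1)^d := by
    calc (t.filter fun v => nu v = n).card ≤ (bbox d n \ bbox d (n-1)).card :=
          Finset.card_le_card hsub
      _ = (2*n+1)^d - (2*(n-1)+1)^d := by
          rw [Finset.card_sdiff_of_subset (bbox_mono (by omega)), card_bbox, card_bbox]
  refine h1.trans ?_
  have he : 2*(n-1)+1 = 2*n-1 := by omega
  rw [he]
  -- now pure ℕ inequality
  have hd' : d = (d-1) + 1 := by omega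
  zify [Nat.pow_le_pow_left (show 2*n-1 ≤ 2*n+1 by omega) d]
  have key := int_pow_sub_pow_le (2*(n:ℤ)+1) (2*(n:ℤ)-1) (by push_cast; omega) (by linarith) (d-1)
  have hcast1 : ((2*n+1 : ℕ) : ℤ) = 2*(n:ℤ)+1 := by push_cast; ring
  have hcast2 : ((2*n-1 : ℕ) : ℤ) = 2*(n:ℤ)-1 := by push_cast [Nat.cast_sub (by omega : 1 ≤ 2*n)]; ring
  rw [hcast2]
  have hcd : ((d-1:ℕ):ℤ) + 1 = (d:ℤ) := by omega
  have h2 : (2*(n:ℤ)+1)^(d-1) ≤ (3*(n:ℤ))^(d-1) := by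
    apply pow_le_pow_left₀ (by push_cast; omega) (by push_cast; omega)
  have key2 : (2*(n:ℤ)+1)^d - (2*(n:ℤ)-1)^d
      ≤ (((d-1:ℕ):ℤ)+1) * ((2*(n:ℤ)+1) - (2*(n:ℤ)-1)) * (2*(n:ℤ)+1)^(d-1) := by
    rw [hd']
    simp only [Nat.add_sub_cancel]
    exact key
  calc (2*(n:ℤ)+1)^d - (2*(n:ℤ)-1)^d
      ≤ (((d-1:ℕ):ℤ)+1) * ((2*(n:ℤ)+1) - (2*(n:ℤ)-1)) * (2*(n:ℤ)+1)^(d-1) := key2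
    _ = 2*(((d-1:ℕ):ℤ)+1) * (2*(n:ℤ)+1)^(d-1) := by ring
    _ ≤ 2*(((d-1:ℕ):ℤ)+1) * (3*(n:ℤ))^(d-1) := by
        apply mul_le_mul_of_nonneg_left h2 (by positivity)
    _ = 2*(d:ℤ) * 3^(d-1) * (n:ℤ)^(d-1) := by rw [hcd, mul_pow]; ring

lemma tail_bound (hd : 1 ≤ d) {a : ℝ} (ha : (d:ℝ) < a) (t : Finset (Fin d → ℤ)) (N : ℕ)
    (hN : 1 ≤ N) :
    ∑ v ∈ t, (if N < nu v then ((nu v : ℕ):ℝ) ^ (-a) else 0)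
      ≤ ((2*d*3^(d-1) : ℕ):ℝ) * (a - d)⁻¹ * (N:ℝ) ^ ((d:ℝ) - a) := by
  classical
  rw [← Finset.sum_filter]
  set t' := t.filter (fun v => N < nu v) with ht'
  set M := t.sup nu with hM
  have hmaps : ∀ v ∈ t', nu v ∈ Ioc N M := by
    intro v hv
    rw [ht', mem_filter] at hv
    exact mem_Ioc.mpr ⟨hv.2, Finset.le_sup (f := nu) hv.1⟩
  rw [← Finset.sum_fiberwise_of_maps_to hmaps]
  have inner : ∀ n ∈ Ioc N M, (∑ v ∈ t'.filter (fun v => nu v = n), ((nu v : ℕ):ℝ) ^ (-a))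
      ≤ ((2*d*3^(d-1):ℕ):ℝ) * (n:ℝ) ^ (((d:ℝ) - 1) - a) := by
    intro n hn
    rw [mem_Ioc] at hn
    have hn1 : 1 ≤ n := le_trans hN hn.1.le
    have hn0 : (0:ℝ) < (n:ℝ) := by exact_mod_cast hn1
    have hconst : ∀ v ∈ t'.filter (fun v => nu v = n), ((nu v:ℕ):ℝ)^(-a) = (n:ℝ)^(-a) := by
      intro v hv; rw [mem_filter] at hv; rw [hv.2]
    rw [Finset.sum_congr rfl hconst, Finset.sum_const, nsmul_eq_mul]
    have hcard := card_shell_le hd t' n hn1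
    have hterm : (0:ℝ) ≤ (n:ℝ)^(-a) := rpow_nonneg hn0.le _
    calc (((t'.filter (fun v => nu v = n)).card : ℝ)) * (n:ℝ)^(-a)
        ≤ ((2*d*3^(d-1) * n^(d-1) : ℕ):ℝ) * (n:ℝ)^(-a) := by
          apply mul_le_mul_of_nonneg_right _ hterm
          exact_mod_cast hcard
      _ = ((2*d*3^(d-1):ℕ):ℝ) * ((n:ℝ)^((d-1:ℕ)) * (n:ℝ)^(-a)) := by push_cast; ring
      _ = ((2*d*3^(d-1):ℕ):ℝ) * (n:ℝ)^(((d:ℝ)-1) - a) := by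
          rw [← Real.rpow_natCast (n:ℝ) (d-1), ← Real.rpow_add hn0]
          congr 2
          push_cast [Nat.cast_sub hd]
          ring
  calc (∑ n ∈ Ioc N M, ∑ v ∈ t'.filter (fun v => nu v = n), ((nu v:ℕ):ℝ)^(-a))
      ≤ ∑ n ∈ Ioc N M, ((2*d*3^(d-1):ℕ):ℝ) * (n:ℝ)^(((d:ℝ)-1) - a) := sum_le_sum inner
    _ = ((2*d*3^(d-1):ℕ):ℝ) * ∑ n ∈ Ioc N M, (n:ℝ)^(-(a - ((d:ℝ)-1))) := by
        rw [mul_sum]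
        apply Finset.sum_congr rfl
        intro n _
        congr 2
        ring
    _ ≤ ((2*d*3^(d-1):ℕ):ℝ) * ((a - ((d:ℝ)-1) - 1)⁻¹ * (N:ℝ)^(1 - (a - ((d:ℝ)-1)))) := by
        apply mul_le_mul_of_nonneg_left (sum_Ioc_rpow_le (by linarith) N M hN) (by positivity)
    _ = ((2*d*3^(d-1):ℕ):ℝ) * (a - d)⁻¹ * (N:ℝ)^((d:ℝ) - a) := by
        rw [show a - ((d:ℝ)-1) - 1 = a - d by ring,
          show 1 - (a - ((d:ℝ)-1)) = (d:ℝ) - a by ring]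
        ring

lemma ball_bound (hd : 1 ≤ d) {e : ℝ} (he0 : 0 < e) (hed : e < d) (t : Finset (Fin d → ℤ))
    (N : ℕ) (hN : 1 ≤ N) :
    ∑ v ∈ t, (if v ≠ 0 ∧ nu v ≤ N then ((nu v : ℕ):ℝ) ^ (-e) else 0)
      ≤ ((2*d*3^(d-1) : ℕ):ℝ) * (1 + ((d:ℝ) - e)⁻¹) * (N:ℝ) ^ ((d:ℝ) - e) := by
  classical
  rw [← Finset.sum_filter]
  set t' := t.filter (fun v => v ≠ 0 ∧ nu v ≤ N) with ht'
  have hmaps : ∀ v ∈ t', nu v ∈ Icc 1 N := by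
    intro v hv
    rw [ht', mem_filter] at hv
    exact mem_Icc.mpr ⟨nu_pos hv.2.1, hv.2.2⟩
  rw [← Finset.sum_fiberwise_of_maps_to hmaps]
  have inner : ∀ n ∈ Icc 1 N, (∑ v ∈ t'.filter (fun v => nu v = n), ((nu v : ℕ):ℝ) ^ (-e))
      ≤ ((2*d*3^(d-1):ℕ):ℝ) * (n:ℝ) ^ (((d:ℝ) - 1) - e) := by
    intro n hn
    rw [mem_Icc] at hn
    have hn1 : 1 ≤ n := hn.1
    have hn0 : (0:ℝ) < (n:ℝ) := by exact_mod_cast hn1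
    have hconst : ∀ v ∈ t'.filter (fun v => nu v = n), ((nu v:ℕ):ℝ)^(-e) = (n:ℝ)^(-e) := by
      intro v hv; rw [mem_filter] at hv; rw [hv.2]
    rw [Finset.sum_congr rfl hconst, Finset.sum_const, nsmul_eq_mul]
    have hcard := card_shell_le hd t' n hn1
    have hterm : (0:ℝ) ≤ (n:ℝ)^(-e) := rpow_nonneg hn0.le _
    calc (((t'.filter (fun v => nu v = n)).card : ℝ)) * (n:ℝ)^(-e)
        ≤ ((2*d*3^(d-1) * n^(d-1) : ℕ):ℝ) * (n:ℝ)^(-e) := by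
          apply mul_le_mul_of_nonneg_right _ hterm
          exact_mod_cast hcard
      _ = ((2*d*3^(d-1):ℕ):ℝ) * ((n:ℝ)^((d-1:ℕ)) * (n:ℝ)^(-e)) := by push_cast; ring
      _ = ((2*d*3^(d-1):ℕ):ℝ) * (n:ℝ)^(((d:ℝ)-1) - e) := by
          rw [← Real.rpow_natCast (n:ℝ) (d-1), ← Real.rpow_add hn0]
          congr 2
          push_cast [Nat.cast_sub hd]
          ring
  calc (∑ n ∈ Icc 1 N, ∑ v ∈ t'.filter (fun v => nu v = n), ((nu v:ℕ):ℝ)^(-e))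
      ≤ ∑ n ∈ Icc 1 N, ((2*d*3^(d-1):ℕ):ℝ) * (n:ℝ)^(((d:ℝ)-1) - e) := sum_le_sum inner
    _ = ((2*d*3^(d-1):ℕ):ℝ) * ∑ n ∈ Icc 1 N, (n:ℝ)^(((d:ℝ)-1) - e) := by rw [mul_sum]
    _ ≤ ((2*d*3^(d-1):ℕ):ℝ) * ((1 + (((d:ℝ)-1-e)+1)⁻¹) * (N:ℝ)^((((d:ℝ)-1-e))+1)) := by
        apply mul_le_mul_of_nonneg_left (sum_Icc_rpow_le (by linarith) N hN) (by positivity)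
    _ = ((2*d*3^(d-1):ℕ):ℝ) * (1 + ((d:ℝ) - e)⁻¹) * (N:ℝ) ^ ((d:ℝ) - e) := by
        rw [show ((d:ℝ)-1-e)+1 = (d:ℝ) - e by ring]
        ring


lemma znorm_nonneg (v : Fin d → ℤ) : 0 ≤ znorm v := Real.sqrt_nonneg _

lemma nu_le_znorm (hd : 1 ≤ d) (v : Fin d → ℤ) : ((nu v : ℕ):ℝ) ≤ znorm v := by
  haveI : Nonempty (Fin d) := ⟨⟨0, hd⟩⟩
  obtain ⟨i, _, hi⟩ := Finset.exists_mem_eq_sup Finset.univ univ_nonempty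
    (fun i => (v i).natAbs)
  have h1 : ((nu v : ℕ):ℝ) = |((v i : ℤ):ℝ)| := by
    rw [nu, hi]
    rw [Nat.cast_natAbs, Int.cast_abs]
  have h2 : |((v i : ℤ):ℝ)|^2 ≤ ∑ j, ((v j : ℤ):ℝ)^2 := by
    rw [sq_abs]
    exact Finset.single_le_sum (f := fun j => ((v j : ℤ):ℝ)^2)
      (fun j _ => sq_nonneg _) (mem_univ i)
  rw [znorm, h1, show |((v i : ℤ):ℝ)| = Real.sqrt (|((v i : ℤ):ℝ)|^2) by
    rw [Real.sqrt_sq (abs_nonneg _)]]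
  exact Real.sqrt_le_sqrt h2

lemma znorm_le_sqrt_mul_nu (v : Fin d → ℤ) : znorm v ≤ Real.sqrt d * ((nu v : ℕ):ℝ) := by
  have h1 : ∑ j, ((v j : ℤ):ℝ)^2 ≤ (d:ℝ) * ((nu v : ℕ):ℝ)^2 := by
    calc ∑ j, ((v j : ℤ):ℝ)^2 ≤ ∑ _j : Fin d, ((nu v : ℕ):ℝ)^2 := by
          apply Finset.sum_le_sum
          intro j _
          rw [← sq_abs, ← Int.cast_abs]
          have : |v j| ≤ ((nu v : ℕ):ℤ) := by
            rw [← Int.natCast_natAbs]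
            exact_mod_cast natAbs_le_nu v j
          apply pow_le_pow_left₀ (by positivity) (by exact_mod_cast this)
      _ = (d:ℝ) * ((nu v : ℕ):ℝ)^2 := by
          rw [Finset.sum_const, Finset.card_univ, Fintype.card_fin, nsmul_eq_mul]
  calc znorm v ≤ Real.sqrt ((d:ℝ) * ((nu v : ℕ):ℝ)^2) := Real.sqrt_le_sqrt h1
    _ = Real.sqrt d * ((nu v : ℕ):ℝ) := by
        rw [Real.sqrt_mul (by positivity), Real.sqrt_sq (by positivity)]

lemma inv_rpow_le_aux {x y c L : ℝ} (hx : 0 < x) (hy : 0 < y) (hc : 0 < c) (hL : 0 ≤ L)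
    (h : y ≤ c * x) : x^(-L) ≤ c^L * y^(-L) := by
  have h1 : y^L ≤ c^L * x^L := by
    rw [← Real.mul_rpow hc.le hx.le]
    exact Real.rpow_le_rpow hy.le h hL
  have hxl : 0 < x^L := rpow_pos_of_pos hx L
  have hyl : 0 < y^L := rpow_pos_of_pos hy L
  rw [Real.rpow_neg hx.le, Real.rpow_neg hy.le, ← div_eq_mul_inv, inv_eq_one_div,
    div_le_div_iff₀ hxl hyl]
  linarith


/-- Convolution estimate (Lemma 3.10): for `0 < l, m < d` with `l + m - d > 0`, the sum over
nonzero lattice points `k₁ + k₂ = k` of `1/(|k₁|^l |k₂|^m)` is bounded by `C/|k|^(l+m-d)`. -/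
theorem stmt0 (d : ℕ) (hd : 1 ≤ d) (l m : ℝ)
    (hl0 : 0 < l) (hld : l < d) (hm0 : 0 < m) (hmd : m < d) (hlm : l + m - d > 0) :
    ∃ C > 0, ∀ k : Fin d → ℤ, k ≠ 0 →
      (∑' p : {p : (Fin d → ℤ) × (Fin d → ℤ) // p.1 ≠ 0 ∧ p.2 ≠ 0 ∧ p.1 + p.2 = k},
          1 / (znorm p.1.1 ^ l * znorm p.1.2 ^ m))
        ≤ C / znorm k ^ (l + m - d) := by
  classical
  have hd0 : (0:ℝ) < d := by exact_mod_cast hd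
  set κ : ℝ := ((2*d*3^(d-1) : ℕ):ℝ) with hκdef
  have hκ0 : 0 < κ := by
    have h3 : 0 < 3^(d-1) := pow_pos (by norm_num) _
    have hκn : 0 < 2*d*3^(d-1) := Nat.mul_pos (by omega) h3
    rw [hκdef]
    exact_mod_cast hκn
  have h2l : (0:ℝ) < 2^l := rpow_pos_of_pos (by norm_num) _
  have h2m : (0:ℝ) < 2^m := rpow_pos_of_pos (by norm_num) _
  have h2d : (0:ℝ) < 2^(d:ℝ) := rpow_pos_of_pos (by norm_num) _
  have hCt : (0:ℝ) < κ * (l + m - (d:ℝ))⁻¹ := mul_pos hκ0 (inv_pos.mpr hlm)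
  have hCBm : (0:ℝ) < κ * (1 + ((d:ℝ) - m)⁻¹) := by
    have := inv_pos.mpr (show (0:ℝ) < (d:ℝ) - m by linarith)
    exact mul_pos hκ0 (by linarith)
  have hCBl : (0:ℝ) < κ * (1 + ((d:ℝ) - l)⁻¹) := by
    have := inv_pos.mpr (show (0:ℝ) < (d:ℝ) - l by linarith)
    exact mul_pos hκ0 (by linarith)
  set C₀ : ℝ := 2^l * 2^(d:ℝ) * (κ * (1 + ((d:ℝ) - m)⁻¹)) + 2^l * (κ * (l + m - (d:ℝ))⁻¹)
      + (2^m * 2^(d:ℝ) * (κ * (1 + ((d:ℝ) - l)⁻¹)) + 2^m * (κ * (l + m - (d:ℝ))⁻¹))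
    with hC₀def
  have hC₀ : 0 < C₀ := by
    have p1 := mul_pos (mul_pos h2l h2d) hCBm
    have p2 := mul_pos h2l hCt
    have p3 := mul_pos (mul_pos h2m h2d) hCBl
    have p4 := mul_pos h2m hCt
    rw [hC₀def]
    linarith
  have hsd : (0:ℝ) < Real.sqrt d := Real.sqrt_pos.mpr hd0
  have hsds : (0:ℝ) < Real.sqrt d ^ (l + m - (d:ℝ)) := rpow_pos_of_pos hsd _
  refine ⟨C₀ * Real.sqrt d ^ (l + m - (d:ℝ)), mul_pos hC₀ hsds, ?_⟩
  intro k hk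
  set n : ℕ := nu k with hndef
  have hn1 : 1 ≤ n := nu_pos hk
  have hn0 : (0:ℝ) < (n:ℝ) := by exact_mod_cast hn1
  have hz1 : (1:ℝ) ≤ znorm k := le_trans (by exact_mod_cast hn1) (nu_le_znorm hd k)
  have hz0 : (0:ℝ) < znorm k := by linarith
  have hzs : (0:ℝ) < znorm k ^ (l + m - (d:ℝ)) := rpow_pos_of_pos hz0 _
  have main : ∀ T : Finset {p : (Fin d → ℤ) × (Fin d → ℤ) // p.1 ≠ 0 ∧ p.2 ≠ 0 ∧ p.1 + p.2 = k},
      ∑ p ∈ T, 1 / (znorm p.1.1 ^ l * znorm p.1.2 ^ m)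
        ≤ C₀ * Real.sqrt d ^ (l + m - (d:ℝ)) / znorm k ^ (l + m - (d:ℝ)) := by
    intro T
    have hinj : ∀ x ∈ T, ∀ y ∈ T, x.1.1 = y.1.1 → x = y := by
      intro x _ y _ hxy
      have hx2 : x.1.2 = k - x.1.1 := eq_sub_of_add_eq' x.2.2.2
      have hy2 : y.1.2 = k - y.1.1 := eq_sub_of_add_eq' y.2.2.2
      apply Subtype.ext
      apply Prod.ext hxy
      rw [hx2, hy2, hxy]
    have hT : ∑ p ∈ T, 1 / (znorm p.1.1 ^ l * znorm p.1.2 ^ m)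
        = ∑ j ∈ T.image (fun p => p.1.1), 1 / (znorm j ^ l * znorm (k - j) ^ m) := by
      rw [Finset.sum_image hinj]
      apply Finset.sum_congr rfl
      intro p _
      have hp2 : p.1.2 = k - p.1.1 := eq_sub_of_add_eq' p.2.2.2
      rw [hp2]
    rw [hT]
    set t := T.image (fun p => p.1.1) with htdef
    have htmem : ∀ j ∈ t, j ≠ 0 ∧ j ≠ k := by
      intro j hj
      rw [htdef, Finset.mem_image] at hj
      obtain ⟨p, _, rfl⟩ := hj
      refine ⟨p.2.1, ?_⟩
      intro hjk
      have hp2 : p.1.2 = k - p.1.1 := eq_sub_of_add_eq' p.2.2.2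
      apply p.2.2.1
      rw [hp2, hjk, sub_self]
    have heart : ∀ j ∈ t, 1 / (znorm j ^ l * znorm (k - j) ^ m)
        ≤ (2:ℝ)^l * (n:ℝ)^(-l) *
            (if k - j ≠ 0 ∧ nu (k-j) ≤ 2*n then ((nu (k-j) : ℕ):ℝ)^(-m) else 0)
          + (2:ℝ)^l * (if 2*n < nu (k - j) then ((nu (k-j):ℕ):ℝ)^(-(l+m)) else 0)
          + ((2:ℝ)^m * (n:ℝ)^(-m) *
            (if j ≠ 0 ∧ nu j ≤ 2*n then ((nu j:ℕ):ℝ)^(-l) else 0)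
          + (2:ℝ)^m * (if 2*n < nu j then ((nu j:ℕ):ℝ)^(-(l+m)) else 0)) := by
      intro j hj
      obtain ⟨hj0, hjk⟩ := htmem j hj
      have hu0 : k - j ≠ 0 := sub_ne_zero.mpr (Ne.symm hjk)
      have hνj : 1 ≤ nu j := nu_pos hj0
      have hνu : 1 ≤ nu (k - j) := nu_pos hu0
      have hxj : (0:ℝ) < ((nu j:ℕ):ℝ) := by exact_mod_cast hνj
      have hxu : (0:ℝ) < ((nu (k-j):ℕ):ℝ) := by exact_mod_cast hνu
      have hP1 : 0 ≤ (2:ℝ)^l * (n:ℝ)^(-l) *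
          (if k - j ≠ 0 ∧ nu (k-j) ≤ 2*n then ((nu (k-j) : ℕ):ℝ)^(-m) else 0) := by
        apply mul_nonneg (by positivity)
        split
        · positivity
        · exact le_refl 0
      have hP2 : 0 ≤ (2:ℝ)^l * (if 2*n < nu (k - j) then ((nu (k-j):ℕ):ℝ)^(-(l+m)) else 0) := by
        apply mul_nonneg (by positivity)
        split
        · positivity
        · exact le_refl 0
      have hP3 : 0 ≤ (2:ℝ)^m * (n:ℝ)^(-m) *
          (if j ≠ 0 ∧ nu j ≤ 2*n then ((nu j:ℕ):ℝ)^(-l) else 0) := by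
        apply mul_nonneg (by positivity)
        split
        · positivity
        · exact le_refl 0
      have hP4 : 0 ≤ (2:ℝ)^m * (if 2*n < nu j then ((nu j:ℕ):ℝ)^(-(l+m)) else 0) := by
        apply mul_nonneg (by positivity)
        split
        · positivity
        · exact le_refl 0
      have base : 1 / (znorm j ^ l * znorm (k - j) ^ m)
          ≤ ((nu j:ℕ):ℝ)^(-l) * ((nu (k-j):ℕ):ℝ)^(-m) := by
        have h1 : ((nu j:ℕ):ℝ)^l ≤ znorm j ^ l :=
          Real.rpow_le_rpow hxj.le (nu_le_znorm hd j) hl0.le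
        have h2 : ((nu (k-j):ℕ):ℝ)^m ≤ znorm (k-j) ^ m :=
          Real.rpow_le_rpow hxu.le (nu_le_znorm hd _) hm0.le
        have hb1 : (0:ℝ) < ((nu j:ℕ):ℝ)^l := rpow_pos_of_pos hxj _
        have hb2 : (0:ℝ) < ((nu (k-j):ℕ):ℝ)^m := rpow_pos_of_pos hxu _
        have hmul : ((nu j:ℕ):ℝ)^l * ((nu (k-j):ℕ):ℝ)^m ≤ znorm j ^ l * znorm (k-j) ^ m :=
          mul_le_mul h1 h2 hb2.le (rpow_nonneg (znorm_nonneg j) l)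
        calc 1 / (znorm j ^ l * znorm (k - j) ^ m)
            ≤ 1 / (((nu j:ℕ):ℝ)^l * ((nu (k-j):ℕ):ℝ)^m) :=
              one_div_le_one_div_of_le (mul_pos hb1 hb2) hmul
          _ = ((nu j:ℕ):ℝ)^(-l) * ((nu (k-j):ℕ):ℝ)^(-m) := by
              rw [Real.rpow_neg hxj.le, Real.rpow_neg hxu.le, one_div, mul_inv]
      by_cases h2far : 2*n < nu (k - j)
      · have ht2 := nu_triangle2 k j
        have hle : ((nu (k-j):ℕ):ℝ) ≤ 2 * ((nu j:ℕ):ℝ) := by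
          exact_mod_cast (show nu (k-j) ≤ 2 * nu j by omega)
        have hb := inv_rpow_le_aux hxj hxu (by norm_num) hl0.le hle
        have hstep : 1 / (znorm j ^ l * znorm (k - j) ^ m)
            ≤ (2:ℝ)^l * ((nu (k-j):ℕ):ℝ)^(-(l+m)) := by
          calc 1 / (znorm j ^ l * znorm (k - j) ^ m)
              ≤ ((nu j:ℕ):ℝ)^(-l) * ((nu (k-j):ℕ):ℝ)^(-m) := base
            _ ≤ ((2:ℝ)^l * ((nu (k-j):ℕ):ℝ)^(-l)) * ((nu (k-j):ℕ):ℝ)^(-m) :=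
                mul_le_mul_of_nonneg_right hb (rpow_nonneg hxu.le _)
            _ = (2:ℝ)^l * ((nu (k-j):ℕ):ℝ)^(-(l+m)) := by
                rw [mul_assoc, ← Real.rpow_add hxu]
                ring_nf
        have hif : (2:ℝ)^l * (if 2*n < nu (k - j) then ((nu (k-j):ℕ):ℝ)^(-(l+m)) else 0)
            = (2:ℝ)^l * ((nu (k-j):ℕ):ℝ)^(-(l+m)) := by rw [if_pos h2far]
        linarith [hP1, hP3, hP4, hstep, hif.ge, hif.le]
      · by_cases h4far : 2*n < nu j
        · have ht3 := nu_triangle3 k j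
          have hle : ((nu j:ℕ):ℝ) ≤ 2 * ((nu (k-j):ℕ):ℝ) := by
            exact_mod_cast (show nu j ≤ 2 * nu (k-j) by omega)
          have hb := inv_rpow_le_aux hxu hxj (by norm_num) hm0.le hle
          have hstep : 1 / (znorm j ^ l * znorm (k - j) ^ m)
              ≤ (2:ℝ)^m * ((nu j:ℕ):ℝ)^(-(l+m)) := by
            calc 1 / (znorm j ^ l * znorm (k - j) ^ m)
                ≤ ((nu j:ℕ):ℝ)^(-l) * ((nu (k-j):ℕ):ℝ)^(-m) := base
              _ ≤ ((nu j:ℕ):ℝ)^(-l) * ((2:ℝ)^m * ((nu j:ℕ):ℝ)^(-m)) :=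
                  mul_le_mul_of_nonneg_left hb (rpow_nonneg hxj.le _)
              _ = (2:ℝ)^m * ((nu j:ℕ):ℝ)^(-(l+m)) := by
                  rw [show ((nu j:ℕ):ℝ)^(-l) * ((2:ℝ)^m * ((nu j:ℕ):ℝ)^(-m))
                    = (2:ℝ)^m * (((nu j:ℕ):ℝ)^(-l) * ((nu j:ℕ):ℝ)^(-m)) by ring,
                    ← Real.rpow_add hxj]
                  ring_nf
          have hif : (2:ℝ)^m * (if 2*n < nu j then ((nu j:ℕ):ℝ)^(-(l+m)) else 0)
              = (2:ℝ)^m * ((nu j:ℕ):ℝ)^(-(l+m)) := by rw [if_pos h4far]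
          linarith [hP1, hP2, hP3, hstep, hif.ge, hif.le]
        · have ht1 := nu_triangle1 k j
          by_cases hA : n ≤ 2 * nu j
          · have hle : ((n:ℕ):ℝ) ≤ 2 * ((nu j:ℕ):ℝ) := by
              exact_mod_cast hA
            have hb := inv_rpow_le_aux hxj hn0 (by norm_num) hl0.le hle
            have hstep : 1 / (znorm j ^ l * znorm (k - j) ^ m)
                ≤ (2:ℝ)^l * (n:ℝ)^(-l) * ((nu (k-j):ℕ):ℝ)^(-m) := by
              calc 1 / (znorm j ^ l * znorm (k - j) ^ m)
                  ≤ ((nu j:ℕ):ℝ)^(-l) * ((nu (k-j):ℕ):ℝ)^(-m) := base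
                _ ≤ ((2:ℝ)^l * (n:ℝ)^(-l)) * ((nu (k-j):ℕ):ℝ)^(-m) :=
                    mul_le_mul_of_nonneg_right hb (rpow_nonneg hxu.le _)
            have hif : (2:ℝ)^l * (n:ℝ)^(-l) *
                (if k - j ≠ 0 ∧ nu (k-j) ≤ 2*n then ((nu (k-j) : ℕ):ℝ)^(-m) else 0)
                = (2:ℝ)^l * (n:ℝ)^(-l) * ((nu (k-j):ℕ):ℝ)^(-m) := by
              rw [if_pos ⟨hu0, by omega⟩]
            linarith [hP2, hP3, hP4, hstep, hif.ge, hif.le]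
          · have hB : ((n:ℕ):ℝ) ≤ 2 * ((nu (k-j):ℕ):ℝ) := by
              exact_mod_cast (show n ≤ 2 * nu (k-j) by omega)
            have hb := inv_rpow_le_aux hxu hn0 (by norm_num) hm0.le hB
            have hstep : 1 / (znorm j ^ l * znorm (k - j) ^ m)
                ≤ (2:ℝ)^m * (n:ℝ)^(-m) * ((nu j:ℕ):ℝ)^(-l) := by
              calc 1 / (znorm j ^ l * znorm (k - j) ^ m)
                  ≤ ((nu j:ℕ):ℝ)^(-l) * ((nu (k-j):ℕ):ℝ)^(-m) := base
                _ ≤ ((nu j:ℕ):ℝ)^(-l) * ((2:ℝ)^m * (n:ℝ)^(-m)) :=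
                    mul_le_mul_of_nonneg_left hb (rpow_nonneg hxj.le _)
                _ = (2:ℝ)^m * (n:ℝ)^(-m) * ((nu j:ℕ):ℝ)^(-l) := by ring
            have hif : (2:ℝ)^m * (n:ℝ)^(-m) *
                (if j ≠ 0 ∧ nu j ≤ 2*n then ((nu j:ℕ):ℝ)^(-l) else 0)
                = (2:ℝ)^m * (n:ℝ)^(-m) * ((nu j:ℕ):ℝ)^(-l) := by
              rw [if_pos ⟨hj0, by omega⟩]
            linarith [hP1, hP2, hP4, hstep, hif.ge, hif.le]
    have hsplit : ∑ j ∈ t, 1 / (znorm j ^ l * znorm (k - j) ^ m)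
        ≤ (2:ℝ)^l * (n:ℝ)^(-l) *
            (∑ j ∈ t, if k - j ≠ 0 ∧ nu (k-j) ≤ 2*n then ((nu (k-j):ℕ):ℝ)^(-m) else 0)
          + (2:ℝ)^l * (∑ j ∈ t, if 2*n < nu (k-j) then ((nu (k-j):ℕ):ℝ)^(-(l+m)) else 0)
          + ((2:ℝ)^m * (n:ℝ)^(-m) *
            (∑ j ∈ t, if j ≠ 0 ∧ nu j ≤ 2*n then ((nu j:ℕ):ℝ)^(-l) else 0)
          + (2:ℝ)^m * (∑ j ∈ t, if 2*n < nu j then ((nu j:ℕ):ℝ)^(-(l+m)) else 0)) := by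
      refine le_trans (Finset.sum_le_sum heart) (le_of_eq ?_)
      rw [Finset.sum_add_distrib, Finset.sum_add_distrib, Finset.sum_add_distrib,
        ← Finset.mul_sum, ← Finset.mul_sum, ← Finset.mul_sum, ← Finset.mul_sum]
    have hre1 : (∑ j ∈ t, if k - j ≠ 0 ∧ nu (k-j) ≤ 2*n then ((nu (k-j):ℕ):ℝ)^(-m) else 0)
        = ∑ u ∈ t.image (fun j => k - j),
            (if u ≠ 0 ∧ nu u ≤ 2*n then ((nu u:ℕ):ℝ)^(-m) else 0) := by
      rw [Finset.sum_image (fun x _ y _ h => sub_right_injective h)]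
    have hre2 : (∑ j ∈ t, if 2*n < nu (k-j) then ((nu (k-j):ℕ):ℝ)^(-(l+m)) else 0)
        = ∑ u ∈ t.image (fun j => k - j),
            (if 2*n < nu u then ((nu u:ℕ):ℝ)^(-(l+m)) else 0) := by
      rw [Finset.sum_image (fun x _ y _ h => sub_right_injective h)]
    have hbound1 := ball_bound hd hm0 hmd (t.image (fun j => k - j)) (2*n) (by omega)
    have hbound2 := tail_bound hd (show (d:ℝ) < l + m by linarith)
      (t.image (fun j => k - j)) (2*n) (by omega)
    have hbound3 := ball_bound hd hl0 hld t (2*n) (by omega)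
    have hbound4 := tail_bound hd (show (d:ℝ) < l + m by linarith) t (2*n) (by omega)
    rw [← hκdef] at hbound1 hbound2 hbound3 hbound4
    have hc2n : ((2*n:ℕ):ℝ) = 2*(n:ℝ) := by push_cast; ring
    have h2n_dm : ((2*n:ℕ):ℝ)^((d:ℝ)-m) ≤ 2^(d:ℝ) * (n:ℝ)^((d:ℝ)-m) := by
      rw [hc2n, Real.mul_rpow (by norm_num) hn0.le]
      apply mul_le_mul_of_nonneg_right _ (rpow_nonneg hn0.le _)
      exact Real.rpow_le_rpow_of_exponent_le one_le_two (by linarith)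
    have h2n_dl : ((2*n:ℕ):ℝ)^((d:ℝ)-l) ≤ 2^(d:ℝ) * (n:ℝ)^((d:ℝ)-l) := by
      rw [hc2n, Real.mul_rpow (by norm_num) hn0.le]
      apply mul_le_mul_of_nonneg_right _ (rpow_nonneg hn0.le _)
      exact Real.rpow_le_rpow_of_exponent_le one_le_two (by linarith)
    have h2n_tail : ((2*n:ℕ):ℝ)^((d:ℝ)-(l+m)) ≤ (n:ℝ)^((d:ℝ)-(l+m)) := by
      rw [hc2n]
      exact Real.rpow_le_rpow_of_nonpos hn0 (by linarith) (by linarith)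
    have piece1 : (2:ℝ)^l * (n:ℝ)^(-l) *
          (∑ j ∈ t, if k - j ≠ 0 ∧ nu (k-j) ≤ 2*n then ((nu (k-j):ℕ):ℝ)^(-m) else 0)
        ≤ 2^l * 2^(d:ℝ) * (κ * (1 + ((d:ℝ) - m)⁻¹)) * (n:ℝ)^(-(l+m-(d:ℝ))) := by
      rw [hre1]
      calc (2:ℝ)^l * (n:ℝ)^(-l) * (∑ u ∈ t.image (fun j => k - j),
              (if u ≠ 0 ∧ nu u ≤ 2*n then ((nu u:ℕ):ℝ)^(-m) else 0))
          ≤ (2:ℝ)^l * (n:ℝ)^(-l) * (κ * (1 + ((d:ℝ) - m)⁻¹) * ((2*n:ℕ):ℝ)^((d:ℝ)-m)) := by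
            apply mul_le_mul_of_nonneg_left hbound1 (by positivity)
        _ ≤ (2:ℝ)^l * (n:ℝ)^(-l) * (κ * (1 + ((d:ℝ) - m)⁻¹) * (2^(d:ℝ) * (n:ℝ)^((d:ℝ)-m))) := by
            apply mul_le_mul_of_nonneg_left _ (by positivity)
            exact mul_le_mul_of_nonneg_left h2n_dm hCBm.le
        _ = 2^l * 2^(d:ℝ) * (κ * (1 + ((d:ℝ) - m)⁻¹)) * ((n:ℝ)^(-l) * (n:ℝ)^((d:ℝ)-m)) := by
            ring
        _ = 2^l * 2^(d:ℝ) * (κ * (1 + ((d:ℝ) - m)⁻¹)) * (n:ℝ)^(-(l+m-(d:ℝ))) := by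
            rw [← Real.rpow_add hn0, show -l + ((d:ℝ)-m) = -(l+m-(d:ℝ)) by ring]
    have piece2 : (2:ℝ)^l * (∑ j ∈ t, if 2*n < nu (k-j) then ((nu (k-j):ℕ):ℝ)^(-(l+m)) else 0)
        ≤ 2^l * (κ * (l + m - (d:ℝ))⁻¹) * (n:ℝ)^(-(l+m-(d:ℝ))) := by
      rw [hre2]
      calc (2:ℝ)^l * (∑ u ∈ t.image (fun j => k - j),
              (if 2*n < nu u then ((nu u:ℕ):ℝ)^(-(l+m)) else 0))
          ≤ (2:ℝ)^l * (κ * (l + m - (d:ℝ))⁻¹ * ((2*n:ℕ):ℝ)^((d:ℝ)-(l+m))) := by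
            apply mul_le_mul_of_nonneg_left hbound2 h2l.le
        _ ≤ (2:ℝ)^l * (κ * (l + m - (d:ℝ))⁻¹ * (n:ℝ)^((d:ℝ)-(l+m))) := by
            apply mul_le_mul_of_nonneg_left _ h2l.le
            exact mul_le_mul_of_nonneg_left h2n_tail hCt.le
        _ = 2^l * (κ * (l + m - (d:ℝ))⁻¹) * (n:ℝ)^(-(l+m-(d:ℝ))) := by
            rw [show (d:ℝ)-(l+m) = -(l+m-(d:ℝ)) by ring]
            ring
    have piece3 : (2:ℝ)^m * (n:ℝ)^(-m) *
          (∑ j ∈ t, if j ≠ 0 ∧ nu j ≤ 2*n then ((nu j:ℕ):ℝ)^(-l) else 0)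
        ≤ 2^m * 2^(d:ℝ) * (κ * (1 + ((d:ℝ) - l)⁻¹)) * (n:ℝ)^(-(l+m-(d:ℝ))) := by
      calc (2:ℝ)^m * (n:ℝ)^(-m) *
              (∑ j ∈ t, if j ≠ 0 ∧ nu j ≤ 2*n then ((nu j:ℕ):ℝ)^(-l) else 0)
          ≤ (2:ℝ)^m * (n:ℝ)^(-m) * (κ * (1 + ((d:ℝ) - l)⁻¹) * ((2*n:ℕ):ℝ)^((d:ℝ)-l)) := by
            apply mul_le_mul_of_nonneg_left hbound3 (by positivity)
        _ ≤ (2:ℝ)^m * (n:ℝ)^(-m) * (κ * (1 + ((d:ℝ) - l)⁻¹) * (2^(d:ℝ) * (n:ℝ)^((d:ℝ)-l))) := by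
            apply mul_le_mul_of_nonneg_left _ (by positivity)
            exact mul_le_mul_of_nonneg_left h2n_dl hCBl.le
        _ = 2^m * 2^(d:ℝ) * (κ * (1 + ((d:ℝ) - l)⁻¹)) * ((n:ℝ)^(-m) * (n:ℝ)^((d:ℝ)-l)) := by
            ring
        _ = 2^m * 2^(d:ℝ) * (κ * (1 + ((d:ℝ) - l)⁻¹)) * (n:ℝ)^(-(l+m-(d:ℝ))) := by
            rw [← Real.rpow_add hn0, show -m + ((d:ℝ)-l) = -(l+m-(d:ℝ)) by ring]
    have piece4 : (2:ℝ)^m * (∑ j ∈ t, if 2*n < nu j then ((nu j:ℕ):ℝ)^(-(l+m)) else 0)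
        ≤ 2^m * (κ * (l + m - (d:ℝ))⁻¹) * (n:ℝ)^(-(l+m-(d:ℝ))) := by
      calc (2:ℝ)^m * (∑ j ∈ t, if 2*n < nu j then ((nu j:ℕ):ℝ)^(-(l+m)) else 0)
          ≤ (2:ℝ)^m * (κ * (l + m - (d:ℝ))⁻¹ * ((2*n:ℕ):ℝ)^((d:ℝ)-(l+m))) := by
            apply mul_le_mul_of_nonneg_left hbound4 h2m.le
        _ ≤ (2:ℝ)^m * (κ * (l + m - (d:ℝ))⁻¹ * (n:ℝ)^((d:ℝ)-(l+m))) := by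
            apply mul_le_mul_of_nonneg_left _ h2m.le
            exact mul_le_mul_of_nonneg_left h2n_tail hCt.le
        _ = 2^m * (κ * (l + m - (d:ℝ))⁻¹) * (n:ℝ)^(-(l+m-(d:ℝ))) := by
            rw [show (d:ℝ)-(l+m) = -(l+m-(d:ℝ)) by ring]
            ring
    have hfin : ∑ j ∈ t, 1 / (znorm j ^ l * znorm (k - j) ^ m)
        ≤ C₀ * (n:ℝ)^(-(l+m-(d:ℝ))) := by
      refine le_trans hsplit ?_
      rw [hC₀def]
      have := add_le_add (add_le_add piece1 piece2) (add_le_add piece3 piece4)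
      calc _ ≤ _ := this
        _ = _ := by ring
    refine le_trans hfin ?_
    have h5 : znorm k ^ (l+m-(d:ℝ)) ≤ (Real.sqrt d)^(l+m-(d:ℝ)) * (n:ℝ)^(l+m-(d:ℝ)) := by
      rw [← Real.mul_rpow hsd.le hn0.le]
      exact Real.rpow_le_rpow (znorm_nonneg k) (znorm_le_sqrt_mul_nu k) (by linarith)
    rw [le_div_iff₀ hzs]
    calc C₀ * (n:ℝ)^(-(l+m-(d:ℝ))) * znorm k ^ (l+m-(d:ℝ))
        ≤ C₀ * (n:ℝ)^(-(l+m-(d:ℝ))) * ((Real.sqrt d)^(l+m-(d:ℝ)) * (n:ℝ)^(l+m-(d:ℝ))) := by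
          apply mul_le_mul_of_nonneg_left h5 (mul_nonneg hC₀.le (rpow_nonneg hn0.le _))
      _ = C₀ * Real.sqrt d ^ (l+m-(d:ℝ)) * ((n:ℝ)^(-(l+m-(d:ℝ))) * (n:ℝ)^(l+m-(d:ℝ))) := by
          ring
      _ = C₀ * Real.sqrt d ^ (l+m-(d:ℝ)) := by
          rw [← Real.rpow_add hn0]
          simp
  by_cases hsum : Summable (fun p : {p : (Fin d → ℤ) × (Fin d → ℤ) //
      p.1 ≠ 0 ∧ p.2 ≠ 0 ∧ p.1 + p.2 = k} => 1 / (znorm p.1.1 ^ l * znorm p.1.2 ^ m))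
  · exact Summable.tsum_le_of_sum_le hsum main
  · rw [tsum_eq_zero_of_not_summable hsum]
    exact div_nonneg (mul_pos hC₀ hsds).le hzs.le
end
end

section
/- For any 0 < η < 1 there is a constant C such that for all t > 0, all nonzero x, y ∈ ℝ^d, and all indices i, j, l ∈ {1,...,d}: |e^{-|x|²t} x_i P̂_{jl}(x) − e^{-|y|²t} y_i P̂_{jl}(y)| ≤ C |x − y|^η t^{-(1-η)/2}, where P̂_{jl}(x) = δ_{jl} − x_j x_l / |x|². -/
noncomputable section

private lemma coord_abs_le {d : ℕ} (x : EuclideanSpace ℝ (Fin d)) (i : Fin d) :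
    |x i| ≤ ‖x‖ := by
  have h : x i ^ 2 ≤ ∑ j, ‖x j‖ ^ 2 := by
    have := Finset.single_le_sum (f := fun j => ‖x j‖ ^ 2)
      (fun j _ => sq_nonneg _) (Finset.mem_univ i)
    simpa [Real.norm_eq_abs, sq_abs] using this
  calc |x i| = Real.sqrt (x i ^ 2) := (Real.sqrt_sq_eq_abs _).symm
    _ ≤ Real.sqrt (∑ j, ‖x j‖ ^ 2) := Real.sqrt_le_sqrt h
    _ = ‖x‖ := (EuclideanSpace.norm_eq x).symm

/-- Uniform bound: `|e^{-a²t} xi (δ - xj xl/a²)| ≤ 1/√t`. -/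
private lemma unif_bound (δ xi xj xl a t : ℝ) (hδ : |δ| ≤ 1)
    (hxi : |xi| ≤ a) (hxj : |xj| ≤ a) (hxl : |xl| ≤ a)
    (ha : 0 < a) (ht : 0 < t) :
    |Real.exp (-a ^ 2 * t) * xi * (δ - xj * xl / a ^ 2)| ≤ 1 / Real.sqrt t := by
  have ha2 : (0:ℝ) < a ^ 2 := by positivity
  have hP : |δ - xj * xl / a ^ 2| ≤ 2 := by
    have h1 : |xj * xl / a ^ 2| ≤ 1 := by
      rw [abs_div, abs_mul, abs_of_pos ha2, div_le_one ha2]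
      calc |xj| * |xl| ≤ a * a := by
            apply mul_le_mul hxj hxl (abs_nonneg _) ha.le
        _ = a ^ 2 := by ring
    calc |δ - xj * xl / a ^ 2| ≤ |δ| + |xj * xl / a ^ 2| := abs_sub _ _
      _ ≤ 1 + 1 := add_le_add hδ h1
      _ = 2 := by norm_num
  have hE : |Real.exp (-a ^ 2 * t)| = Real.exp (-a ^ 2 * t) := abs_of_pos (Real.exp_pos _)
  have hF : |Real.exp (-a ^ 2 * t) * xi * (δ - xj * xl / a ^ 2)|
      ≤ Real.exp (-a ^ 2 * t) * a * 2 := by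
    rw [abs_mul, abs_mul, hE]
    apply mul_le_mul _ hP (abs_nonneg _) (by positivity)
    exact mul_le_mul_of_nonneg_left hxi (Real.exp_pos _).le
  refine hF.trans ?_
  have hst : (0:ℝ) < Real.sqrt t := Real.sqrt_pos.2 ht
  have hexp : 2 * a * Real.sqrt t ≤ Real.exp (a ^ 2 * t) := by
    have h1 : a ^ 2 * t + 1 ≤ Real.exp (a ^ 2 * t) := Real.add_one_le_exp _
    nlinarith [sq_nonneg (a * Real.sqrt t - 1), Real.sq_sqrt ht.le]
  rw [neg_mul, Real.exp_neg]
  rw [show (Real.exp (a ^ 2 * t))⁻¹ * a * 2 = (2 * a) / Real.exp (a ^ 2 * t) by ring,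
    div_le_div_iff₀ (Real.exp_pos _) hst]
  linarith [hexp]

set_option maxHeartbeats 1000000 in
/-- Lipschitz bound: assuming `b ≤ a`, the difference is `≤ 18 s`. -/
private lemma lip_bound (δ xi xj xl yi yj yl a b s t : ℝ) (hδ : |δ| ≤ 1)
    (hxi : |xi| ≤ a) (hxj : |xj| ≤ a) (hxl : |xl| ≤ a)
    (hyi : |yi| ≤ b) (hyj : |yj| ≤ b) (hyl : |yl| ≤ b)
    (hsi : |xi - yi| ≤ s) (hsj : |xj - yj| ≤ s) (hsl : |xl - yl| ≤ s)
    (hab : |a - b| ≤ s) (hb : 0 < b) (hba : b ≤ a) (ht : 0 < t) :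
    |Real.exp (-a ^ 2 * t) * xi * (δ - xj * xl / a ^ 2) -
      Real.exp (-b ^ 2 * t) * yi * (δ - yj * yl / b ^ 2)| ≤ 18 * s := by
  have ha : 0 < a := lt_of_lt_of_le hb hba
  have hs : 0 ≤ s := (abs_nonneg _).trans hab
  have habs : a - b ≤ s := (le_abs_self _).trans hab
  have ha2 : (0:ℝ) < a ^ 2 := by positivity
  have hb2 : (0:ℝ) < b ^ 2 := by positivity
  set e1 := Real.exp (-a ^ 2 * t) with he1def
  set e2 := Real.exp (-b ^ 2 * t) with he2def
  have he1 : 0 < e1 := Real.exp_pos _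
  have he2 : 0 < e2 := Real.exp_pos _
  have he2le : e2 ≤ 1 := Real.exp_le_one_iff.2 (by nlinarith [mul_pos hb2 ht])
  have he12 : e1 ≤ e2 := Real.exp_le_exp.2 (by
    have h := mul_le_mul_of_nonneg_right (pow_le_pow_left₀ hb.le hba 2) ht.le
    linarith)
  set P1 := δ - xj * xl / a ^ 2 with hP1def
  set P2 := δ - yj * yl / b ^ 2 with hP2def
  have hP1 : |P1| ≤ 2 := by
    have h1 : |xj * xl / a ^ 2| ≤ 1 := by
      rw [abs_div, abs_mul, abs_of_pos ha2, div_le_one ha2]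
      calc |xj| * |xl| ≤ a * a := mul_le_mul hxj hxl (abs_nonneg _) ha.le
        _ = a ^ 2 := by ring
    calc |P1| ≤ |δ| + |xj * xl / a ^ 2| := abs_sub _ _
      _ ≤ 1 + 1 := add_le_add hδ h1
      _ = 2 := by norm_num
  have hQ1 : |xi * P1| ≤ 2 * a := by
    rw [abs_mul]
    calc |xi| * |P1| ≤ a * 2 := mul_le_mul hxi hP1 (abs_nonneg _) ha.le
      _ = 2 * a := by ring
  -- Term 1: |(e1 - e2) * (xi * P1)| ≤ 12 s
  have hterm1 : |(e1 - e2) * (xi * P1)| ≤ 12 * s := by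
    have habsE : |e1 - e2| = e2 - e1 := by
      rw [abs_sub_comm, abs_of_nonneg (by linarith)]
    rw [abs_mul, habsE]
    rcases le_or_gt a (2 * b) with h2b | h2b
    · -- a ≤ 2b : use e2 - e1 ≤ e2 * (a²-b²) t and b² t e2 ≤ 1
      have hkey : e2 - e1 ≤ e2 * ((a ^ 2 - b ^ 2) * t) := by
        have hsplit : e1 = e2 * Real.exp (-((a ^ 2 - b ^ 2) * t)) := by
          rw [he1def, he2def, ← Real.exp_add]; ring_nf
        have h1u : 1 - (a ^ 2 - b ^ 2) * t ≤ Real.exp (-((a ^ 2 - b ^ 2) * t)) := by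
          have := Real.add_one_le_exp (-((a ^ 2 - b ^ 2) * t))
          linarith
        calc e2 - e1 = e2 * (1 - Real.exp (-((a ^ 2 - b ^ 2) * t))) := by
              rw [hsplit]; ring
          _ ≤ e2 * ((a ^ 2 - b ^ 2) * t) := by
              apply mul_le_mul_of_nonneg_left _ he2.le
              linarith
      have hbte : b ^ 2 * t * e2 ≤ 1 := by
        have hle := Real.add_one_le_exp (b ^ 2 * t)
        calc b ^ 2 * t * e2 = (b ^ 2 * t) / Real.exp (b ^ 2 * t) := by
              rw [he2def, neg_mul, Real.exp_neg]; ring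
          _ ≤ 1 := by rw [div_le_one (Real.exp_pos _)]; linarith
      have h1 : (e2 - e1) * |xi * P1| ≤ e2 * ((a ^ 2 - b ^ 2) * t) * (2 * a) := by
        apply mul_le_mul hkey hQ1 (abs_nonneg _)
        exact mul_nonneg he2.le (mul_nonneg (by nlinarith) ht.le)
      have hfac : 2 * a * (a + b) ≤ 12 * b ^ 2 := by
        nlinarith [mul_nonneg (sub_nonneg.2 h2b) (by positivity : (0:ℝ) ≤ 3 * b + a)]
      have hge : 0 ≤ (a - b) * t * e2 :=
        mul_nonneg (mul_nonneg (sub_nonneg.2 hba) ht.le) he2.le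
      calc (e2 - e1) * |xi * P1| ≤ e2 * ((a ^ 2 - b ^ 2) * t) * (2 * a) := h1
        _ = (2 * a * (a + b)) * ((a - b) * t * e2) := by ring
        _ ≤ (12 * b ^ 2) * ((a - b) * t * e2) := mul_le_mul_of_nonneg_right hfac hge
        _ = 12 * (a - b) * (b ^ 2 * t * e2) := by ring
        _ ≤ 12 * (a - b) * 1 := mul_le_mul_of_nonneg_left hbte (by linarith)
        _ ≤ 12 * s := by linarith
    · -- 2b < a : crude bound, e2 - e1 ≤ 1 and 2a ≤ 4(a-b)
      have h1 : (e2 - e1) * |xi * P1| ≤ 1 * (2 * a) := by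
        apply mul_le_mul (by linarith) hQ1 (abs_nonneg _) (by norm_num)
      have : 2 * a ≤ 4 * (a - b) := by linarith
      linarith
  -- Term 2: |xi * P1 - yi * P2| ≤ 6 s
  have hterm2 : |xi * P1 - yi * P2| ≤ 6 * s := by
    have hPd : |P1 - P2| ≤ 4 * s / a := by
      have hkey : P1 - P2 = -((xj - yj) * xl / a ^ 2 + yj * (xl - yl) / a ^ 2 -
          yj * yl * (a ^ 2 - b ^ 2) / (a ^ 2 * b ^ 2)) := by
        rw [hP1def, hP2def]
        field_simp
        ring
      rw [hkey, abs_neg]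
      have t1 : |(xj - yj) * xl / a ^ 2| ≤ s / a := by
        rw [abs_div, abs_mul, abs_of_pos ha2]
        rw [div_le_div_iff₀ ha2 ha]
        calc |xj - yj| * |xl| * a ≤ s * a * a :=
              mul_le_mul_of_nonneg_right (mul_le_mul hsj hxl (abs_nonneg _) hs) ha.le
          _ = s * a ^ 2 := by ring
      have t2 : |yj * (xl - yl) / a ^ 2| ≤ s / a := by
        rw [abs_div, abs_mul, abs_of_pos ha2]
        rw [div_le_div_iff₀ ha2 ha]
        calc |yj| * |xl - yl| * a ≤ a * s * a := by
              apply mul_le_mul_of_nonneg_right _ ha.le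
              exact mul_le_mul (hyj.trans hba) hsl (abs_nonneg _) ha.le
          _ = s * a ^ 2 := by ring
      have t3 : |yj * yl * (a ^ 2 - b ^ 2) / (a ^ 2 * b ^ 2)| ≤ 2 * s / a := by
        have hD : |a ^ 2 - b ^ 2| ≤ 2 * a * s := by
          rw [abs_of_nonneg (by nlinarith)]
          nlinarith [mul_le_mul_of_nonneg_left habs (by linarith : (0:ℝ) ≤ a + b),
            mul_nonneg hs (sub_nonneg.2 hba)]
        have hyy : |yj * yl| ≤ b ^ 2 := by
          rw [abs_mul]
          calc |yj| * |yl| ≤ b * b := mul_le_mul hyj hyl (abs_nonneg _) hb.le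
            _ = b ^ 2 := by ring
        calc |yj * yl * (a ^ 2 - b ^ 2) / (a ^ 2 * b ^ 2)|
            = |yj * yl| * |a ^ 2 - b ^ 2| / (a ^ 2 * b ^ 2) := by
              rw [abs_div, abs_mul, abs_of_pos (mul_pos ha2 hb2)]
          _ ≤ b ^ 2 * (2 * a * s) / (a ^ 2 * b ^ 2) := by gcongr
          _ = 2 * s / a := by field_simp
      calc |(xj - yj) * xl / a ^ 2 + yj * (xl - yl) / a ^ 2 -
            yj * yl * (a ^ 2 - b ^ 2) / (a ^ 2 * b ^ 2)|
          ≤ |(xj - yj) * xl / a ^ 2 + yj * (xl - yl) / a ^ 2| +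
            |yj * yl * (a ^ 2 - b ^ 2) / (a ^ 2 * b ^ 2)| := abs_sub _ _
        _ ≤ (|(xj - yj) * xl / a ^ 2| + |yj * (xl - yl) / a ^ 2|) +
            |yj * yl * (a ^ 2 - b ^ 2) / (a ^ 2 * b ^ 2)| := by
              gcongr; exact abs_add_le _ _
        _ ≤ (s / a + s / a) + 2 * s / a := by gcongr
        _ = 4 * s / a := by ring
    have hdec : xi * P1 - yi * P2 = (xi - yi) * P1 + yi * (P1 - P2) := by ring
    rw [hdec]
    calc |(xi - yi) * P1 + yi * (P1 - P2)|
        ≤ |(xi - yi) * P1| + |yi * (P1 - P2)| := abs_add_le _ _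
      _ ≤ s * 2 + a * (4 * s / a) := by
          gcongr
          · rw [abs_mul]; exact mul_le_mul hsi hP1 (abs_nonneg _) hs
          · rw [abs_mul]
            exact mul_le_mul (hyi.trans hba) hPd (abs_nonneg _) ha.le
      _ = 6 * s := by field_simp; ring
  -- Combine
  have hdec : e1 * xi * P1 - e2 * yi * P2 = (e1 - e2) * (xi * P1) + e2 * (xi * P1 - yi * P2) := by
    ring
  rw [hdec]
  calc |(e1 - e2) * (xi * P1) + e2 * (xi * P1 - yi * P2)|
      ≤ |(e1 - e2) * (xi * P1)| + |e2 * (xi * P1 - yi * P2)| := abs_add_le _ _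
    _ ≤ 12 * s + 1 * (6 * s) := by
        gcongr
        rw [abs_mul, abs_of_pos he2]
        exact mul_le_mul he2le hterm2 (abs_nonneg _) (by norm_num)
    _ = 18 * s := by ring

set_option maxHeartbeats 1000000 in
/-- Lemma 3.11: interpolation bound for the heat-damped Leray symbol. For `0 < η < 1` there is
`C` such that for all `t > 0`, nonzero `x, y ∈ ℝ^d` and indices `i, j, l`,
`|e^{-|x|²t} x_i P̂_{jl}(x) − e^{-|y|²t} y_i P̂_{jl}(y)| ≤ C |x−y|^η t^{-(1-η)/2}`,
where `P̂_{jl}(x) = δ_{jl} − x_j x_l / |x|²`. -/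
theorem stmt2 (d : ℕ) (hd : 1 ≤ d) (η : ℝ) (hη0 : 0 < η) (hη1 : η < 1) :
    ∃ C > 0, ∀ t : ℝ, 0 < t → ∀ x y : EuclideanSpace ℝ (Fin d), x ≠ 0 → y ≠ 0 →
      ∀ i j l : Fin d,
        |Real.exp (-‖x‖ ^ 2 * t) * x i *
            ((if j = l then (1 : ℝ) else 0) - x j * x l / ‖x‖ ^ 2) -
          Real.exp (-‖y‖ ^ 2 * t) * y i *
            ((if j = l then (1 : ℝ) else 0) - y j * y l / ‖y‖ ^ 2)|
          ≤ C * ‖x - y‖ ^ η * t ^ (-(1 - η) / 2) := by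
  refine ⟨36, by norm_num, ?_⟩
  intro t ht x y hx hy i j l
  have hxn : 0 < ‖x‖ := norm_pos_iff.2 hx
  have hyn : 0 < ‖y‖ := norm_pos_iff.2 hy
  set δ : ℝ := if j = l then (1 : ℝ) else 0 with hδdef
  have hδ : |δ| ≤ 1 := by rw [hδdef]; split <;> norm_num
  set s := ‖x - y‖ with hsdef
  have hs : 0 ≤ s := norm_nonneg _
  have hcoord : ∀ (z : EuclideanSpace ℝ (Fin d)) (k : Fin d), |z k| ≤ ‖z‖ :=
    fun z k => coord_abs_le z k
  have hdiff : ∀ k : Fin d, |x k - y k| ≤ s := by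
    intro k
    have := coord_abs_le (x - y) k
    simpa using this
  have habn : |‖x‖ - ‖y‖| ≤ s := abs_norm_sub_norm_le x y
  set L := |Real.exp (-‖x‖ ^ 2 * t) * x i * (δ - x j * x l / ‖x‖ ^ 2) -
    Real.exp (-‖y‖ ^ 2 * t) * y i * (δ - y j * y l / ‖y‖ ^ 2)| with hLdef
  have hL0 : 0 ≤ L := abs_nonneg _
  -- Lipschitz bound
  have hLip : L ≤ 18 * s := by
    rcases le_total ‖y‖ ‖x‖ with hba | hba
    · exact lip_bound δ (x i) (x j) (x l) (y i) (y j) (y l) ‖x‖ ‖y‖ s t hδ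
        (hcoord x i) (hcoord x j) (hcoord x l) (hcoord y i) (hcoord y j) (hcoord y l)
        (hdiff i) (hdiff j) (hdiff l) habn hyn hba ht
    · rw [hLdef, abs_sub_comm]
      have hdiff' : ∀ k : Fin d, |y k - x k| ≤ s := by
        intro k; rw [abs_sub_comm]; exact hdiff k
      have habn' : |‖y‖ - ‖x‖| ≤ s := by rw [abs_sub_comm]; exact habn
      exact lip_bound δ (y i) (y j) (y l) (x i) (x j) (x l) ‖y‖ ‖x‖ s t hδ
        (hcoord y i) (hcoord y j) (hcoord y l) (hcoord x i) (hcoord x j) (hcoord x l)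
        (hdiff' i) (hdiff' j) (hdiff' l) habn' hxn hba ht
  -- Uniform bound
  have hUnif : L ≤ 2 * t ^ (-(1:ℝ)/2) := by
    have h1 := unif_bound δ (x i) (x j) (x l) ‖x‖ t hδ
      (hcoord x i) (hcoord x j) (hcoord x l) hxn ht
    have h2 := unif_bound δ (y i) (y j) (y l) ‖y‖ t hδ
      (hcoord y i) (hcoord y j) (hcoord y l) hyn ht
    have hrw : (1:ℝ) / Real.sqrt t = t ^ (-(1:ℝ)/2) := by
      rw [Real.sqrt_eq_rpow, one_div, ← Real.rpow_neg ht.le]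
      norm_num
    have h3 : L ≤ |Real.exp (-‖x‖ ^ 2 * t) * x i * (δ - x j * x l / ‖x‖ ^ 2)| +
        |Real.exp (-‖y‖ ^ 2 * t) * y i * (δ - y j * y l / ‖y‖ ^ 2)| := abs_sub _ _
    rw [hrw] at h1 h2
    linarith
  -- Interpolation
  have hA : (0:ℝ) < 2 * t ^ (-(1:ℝ)/2) := by positivity
  have hinterp : L ≤ (2 * t ^ (-(1:ℝ)/2)) ^ (1 - η) * (18 * s) ^ η := by
    rcases eq_or_lt_of_le hL0 with hL | hL
    · rw [← hL]; positivity
    · have hB : 0 < 18 * s := by nlinarith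
      calc L = L ^ ((1 - η) + η) := by
            rw [show (1 - η) + η = 1 by ring, Real.rpow_one]
        _ = L ^ (1 - η) * L ^ η := Real.rpow_add hL _ _
        _ ≤ (2 * t ^ (-(1:ℝ)/2)) ^ (1 - η) * (18 * s) ^ η := by
            apply mul_le_mul
            · exact Real.rpow_le_rpow hL0 hUnif (by linarith)
            · exact Real.rpow_le_rpow hL0 hLip hη0.le
            · positivity
            · positivity
  refine hinterp.trans ?_
  -- expand the powers
  have e1 : (2 * t ^ (-(1:ℝ)/2)) ^ (1 - η) = 2 ^ (1 - η) * t ^ (-(1 - η)/2) := by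
    rw [Real.mul_rpow (by norm_num) (by positivity)]
    congr 1
    rw [← Real.rpow_mul ht.le]
    congr 1
    ring
  have e2 : (18 * s) ^ η = 18 ^ η * s ^ η := Real.mul_rpow (by norm_num) hs
  rw [e1, e2]
  have b1 : (2:ℝ) ^ (1 - η) ≤ 2 := by
    calc (2:ℝ) ^ (1 - η) ≤ (2:ℝ) ^ (1:ℝ) :=
          Real.rpow_le_rpow_of_exponent_le (by norm_num) (by linarith)
      _ = 2 := Real.rpow_one 2
  have b2 : (18:ℝ) ^ η ≤ 18 := by
    calc (18:ℝ) ^ η ≤ (18:ℝ) ^ (1:ℝ) :=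
          Real.rpow_le_rpow_of_exponent_le (by norm_num) hη1.le
      _ = 18 := Real.rpow_one 18
  have htE : (0:ℝ) ≤ t ^ (-(1 - η)/2) := by positivity
  have hsE : (0:ℝ) ≤ s ^ η := by positivity
  calc 2 ^ (1 - η) * t ^ (-(1 - η)/2) * (18 ^ η * s ^ η)
      ≤ 2 * t ^ (-(1 - η)/2) * (18 * s ^ η) := by
        apply mul_le_mul (mul_le_mul_of_nonneg_right b1 htE)
          (mul_le_mul_of_nonneg_right b2 hsE) (by positivity) (by positivity)
    _ = 36 * s ^ η * t ^ (-(1 - η)/2) := by ring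
end
end
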